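/- arXiv:2101.00617 — 2 statements merged into one kernel-verified Lean document; each statement's English description precedes it below -/
import Mathlib

section
/- For n ∈ {2, 3}, the size multipartite Ramsey number m_3(K_{1,2}, P_4, nK_2) equals n. That is, n is the smallest positive integer t such that every 3-coloring of the edges of K_{3×t} contains a copy of K_{1,2} in the first color, or a copy of P_4 in the second color, or a matching nK_2 in the third color. -/
open SimpleGraph

/-- The complete multipartite graph `K_{j x t}` with `j` parts, each of size `t`. -/
def multiK (j t : ℕ) : SimpleGraph (Fin j × Fin t) where
  Adj a b := a.1 ≠ b.1
  symm := ⟨fun _ _ h => Ne.symm h⟩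
  loopless := ⟨fun _ h => h rfl⟩

/-- `G` contains a copy of `H`. -/
def Contains {α β : Type*} (G : SimpleGraph α) (H : SimpleGraph β) : Prop :=
  ∃ f : β → α, Function.Injective f ∧ ∀ ⦃a b⦄, H.Adj a b → G.Adj (f a) (f b)

/-- The monochromatic subgraph of `G` in color `i` under the edge-coloring `c`. -/
def colorClass {α : Type*} {k : ℕ} (G : SimpleGraph α) (c : Sym2 α → Fin k) (i : Fin k) :
    SimpleGraph α where
  Adj a b := G.Adj a b ∧ c s(a, b) = i
  symm := ⟨fun _ _ h => ⟨h.1.symm, by rw [Sym2.eq_swap]; exact h.2⟩⟩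
  loopless := ⟨fun a h => G.loopless.1 a h.1⟩

/-- The stripe `nK₂`: the graph consisting of `n` pairwise disjoint edges. -/
def stripe (n : ℕ) : SimpleGraph (Fin n × Fin 2) where
  Adj a b := a.1 = b.1 ∧ a.2 ≠ b.2
  symm := ⟨fun _ _ h => ⟨h.1.symm, h.2.symm⟩⟩
  loopless := ⟨fun _ h => h.2 rfl⟩

/-- Every 3-coloring of the edges of `K_{j x t}` yields a copy of `K_{1,2}` in color 0,
or of `P₄` in color 1, or of `nK₂` in color 2. -/
def Arrows3 (j t n : ℕ) : Prop :=
  ∀ c : Sym2 (Fin j × Fin t) → Fin 3,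
    Contains (colorClass (multiK j t) c 0) (pathGraph 3) ∨
    Contains (colorClass (multiK j t) c 1) (pathGraph 4) ∨
    Contains (colorClass (multiK j t) c 2) (stripe n)

/-- Every 2-coloring of the edges of `K_{j x t}` yields a copy of `nK₂` in color 0
or of `C₇` in color 1. -/
def ArrowsC7 (j t n : ℕ) : Prop :=
  ∀ c : Sym2 (Fin j × Fin t) → Fin 2,
    Contains (colorClass (multiK j t) c 0) (stripe n) ∨
    Contains (colorClass (multiK j t) c 1) (cycleGraph 7)

section Aux

section Builders
variable {j t : ℕ} (c : Sym2 (Fin j × Fin t) → Fin 3)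

lemma cc_adj {i : Fin 3} {a b : Fin j × Fin t} (h1 : a.1 ≠ b.1) (h2 : c s(a,b) = i) :
    (colorClass (multiK j t) c i).Adj a b := ⟨h1, h2⟩

lemma mkP3 (v x y : Fin j × Fin t) (hvx : v.1 ≠ x.1) (hvy : v.1 ≠ y.1)
    (hxy : x ≠ y) (h1 : c s(v, x) = 0) (h2 : c s(v, y) = 0) :
    Contains (colorClass (multiK j t) c 0) (pathGraph 3) := by
  have hxv : x ≠ v := fun h => hvx (congrArg Prod.fst h).symm
  have hvy' : v ≠ y := fun h => hvy (congrArg Prod.fst h)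
  refine ⟨![x, v, y], ?_, ?_⟩
  · intro a b hab
    fin_cases a <;> fin_cases b <;> simp_all
  · intro a b hab
    rw [pathGraph_adj] at hab
    fin_cases a <;> fin_cases b <;> simp_all
    · exact ⟨fun h => hvx h.symm, by rwa [Sym2.eq_swap]⟩
    · exact ⟨hvx, h1⟩
    · exact ⟨hvy, h2⟩
    · exact ⟨fun h => hvy h.symm, by rwa [Sym2.eq_swap]⟩

lemma mkP4 (w x y z : Fin j × Fin t) (hwx : w.1 ≠ x.1) (hxy : x.1 ≠ y.1) (hyz : y.1 ≠ z.1)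
    (hwy : w ≠ y) (hwz : w ≠ z) (hxz : x ≠ z)
    (h1 : c s(w, x) = 1) (h2 : c s(x, y) = 1) (h3 : c s(y, z) = 1) :
    Contains (colorClass (multiK j t) c 1) (pathGraph 4) := by
  have hwx' : w ≠ x := fun h => hwx (congrArg Prod.fst h)
  have hxy' : x ≠ y := fun h => hxy (congrArg Prod.fst h)
  have hyz' : y ≠ z := fun h => hyz (congrArg Prod.fst h)
  refine ⟨![w, x, y, z], ?_, ?_⟩
  · intro a b hab
    fin_cases a <;> fin_cases b <;> simp_all
  · intro a b hab
    rw [pathGraph_adj] at hab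
    fin_cases a <;> fin_cases b <;> simp_all
    · exact ⟨hwx, h1⟩
    · exact ⟨fun h => hwx h.symm, by rwa [Sym2.eq_swap]⟩
    · exact ⟨hxy, h2⟩
    · exact ⟨fun h => hxy h.symm, by rwa [Sym2.eq_swap]⟩
    · exact ⟨hyz, h3⟩
    · exact ⟨fun h => hyz h.symm, by rwa [Sym2.eq_swap]⟩

lemma mkS2 (w1 w2 w3 w4 : Fin j × Fin t) (a12 : w1.1 ≠ w2.1) (a34 : w3.1 ≠ w4.1)
    (n13 : w1 ≠ w3) (n14 : w1 ≠ w4) (n23 : w2 ≠ w3) (n24 : w2 ≠ w4)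
    (h1 : c s(w1, w2) = 2) (h2 : c s(w3, w4) = 2) :
    Contains (colorClass (multiK j t) c 2) (stripe 2) := by
  have e12 : w1 ≠ w2 := fun h => a12 (congrArg Prod.fst h)
  have e34 : w3 ≠ w4 := fun h => a34 (congrArg Prod.fst h)
  refine ⟨fun p => (![![w1, w2], ![w3, w4]]) p.1 p.2, ?_, ?_⟩
  · intro a b hab
    fin_cases a <;> fin_cases b <;> simp_all
  · rintro ⟨i, k⟩ ⟨i', k'⟩ ⟨hi, hk⟩
    simp only at hi hk
    subst hi
    fin_cases i <;> fin_cases k <;> fin_cases k' <;> simp_all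
    · exact ⟨a12, h1⟩
    · exact ⟨fun h => a12 h.symm, by rwa [Sym2.eq_swap]⟩
    · exact ⟨a34, h2⟩
    · exact ⟨fun h => a34 h.symm, by rwa [Sym2.eq_swap]⟩

lemma mkS3 (w1 w2 w3 w4 w5 w6 : Fin j × Fin t)
    (a12 : w1.1 ≠ w2.1) (a34 : w3.1 ≠ w4.1) (a56 : w5.1 ≠ w6.1)
    (n13 : w1 ≠ w3) (n14 : w1 ≠ w4) (n23 : w2 ≠ w3) (n24 : w2 ≠ w4)
    (n15 : w1 ≠ w5) (n16 : w1 ≠ w6) (n25 : w2 ≠ w5) (n26 : w2 ≠ w6)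
    (n35 : w3 ≠ w5) (n36 : w3 ≠ w6) (n45 : w4 ≠ w5) (n46 : w4 ≠ w6)
    (h1 : c s(w1, w2) = 2) (h2 : c s(w3, w4) = 2) (h3 : c s(w5, w6) = 2) :
    Contains (colorClass (multiK j t) c 2) (stripe 3) := by
  have e12 : w1 ≠ w2 := fun h => a12 (congrArg Prod.fst h)
  have e34 : w3 ≠ w4 := fun h => a34 (congrArg Prod.fst h)
  have e56 : w5 ≠ w6 := fun h => a56 (congrArg Prod.fst h)
  refine ⟨fun p => (![![w1, w2], ![w3, w4], ![w5, w6]]) p.1 p.2, ?_, ?_⟩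
  · intro a b hab
    fin_cases a <;> fin_cases b <;> simp_all
  · rintro ⟨i, k⟩ ⟨i', k'⟩ ⟨hi, hk⟩
    simp only at hi hk
    subst hi
    fin_cases i <;> fin_cases k <;> fin_cases k' <;> simp_all
    · exact ⟨a12, h1⟩
    · exact ⟨fun h => a12 h.symm, by rwa [Sym2.eq_swap]⟩
    · exact ⟨a34, h2⟩
    · exact ⟨fun h => a34 h.symm, by rwa [Sym2.eq_swap]⟩
    · exact ⟨a56, h3⟩
    · exact ⟨fun h => a56 h.symm, by rwa [Sym2.eq_swap]⟩

end Builders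

set_option maxHeartbeats 1000000 in
set_option synthInstance.maxHeartbeats 1000000 in
set_option synthInstance.maxSize 2000 in
lemma DEC : ∀ d1 d2 d3 d4 d5 : Fin 3, d1 ≠ 2 → d2 ≠ 2 → d3 ≠ 2 → d4 ≠ 2 → d5 ≠ 2 →
    (d1 = 0 ∧ d2 = 0) ∨ (d1 = 0 ∧ d3 = 0) ∨ (d2 = 0 ∧ d3 = 0) ∨
    (d1 = 0 ∧ d4 = 0) ∨ (d1 = 0 ∧ d5 = 0) ∨ (d4 = 0 ∧ d5 = 0) ∨
    (d2 = 0 ∧ d4 = 0) ∨ (d3 = 0 ∧ d5 = 0) ∨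
    (d1 = 1 ∧ d2 = 1 ∧ d5 = 1) ∨ (d1 = 1 ∧ d3 = 1 ∧ d4 = 1) ∨
    (d2 = 1 ∧ d3 = 1 ∧ d5 = 1) ∨ (d3 = 1 ∧ d4 = 1 ∧ d5 = 1) ∨
    (d2 = 1 ∧ d4 = 1 ∧ d5 = 1) ∨ (d2 = 1 ∧ d3 = 1 ∧ d4 = 1) := by decide

section L1
variable {j t : ℕ} (c : Sym2 (Fin j × Fin t) → Fin 3)

/-- If the five edges of a `K₄` minus an edge (vertices `p q` adjacent, `r s` in a
common third part) all avoid color 2, we get a `P₃` in color 0 or a `P₄` in color 1. -/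
lemma L1 (p q r s : Fin j × Fin t)
    (hpq : p.1 ≠ q.1) (hpr : p.1 ≠ r.1) (hps : p.1 ≠ s.1)
    (hqr : q.1 ≠ r.1) (hqs : q.1 ≠ s.1) (hrs : r ≠ s)
    (h1 : c s(p, q) ≠ 2) (h2 : c s(p, r) ≠ 2) (h3 : c s(p, s) ≠ 2)
    (h4 : c s(q, r) ≠ 2) (h5 : c s(q, s) ≠ 2) :
    Contains (colorClass (multiK j t) c 0) (pathGraph 3) ∨
    Contains (colorClass (multiK j t) c 1) (pathGraph 4) := by
  have hqr' : q ≠ r := fun h => hqr (congrArg Prod.fst h)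
  have hqs' : q ≠ s := fun h => hqs (congrArg Prod.fst h)
  have hpr' : p ≠ r := fun h => hpr (congrArg Prod.fst h)
  have hps' : p ≠ s := fun h => hps (congrArg Prod.fst h)
  have hpq' : p ≠ q := fun h => hpq (congrArg Prod.fst h)
  have sw : ∀ a b : Fin j × Fin t, c s(a,b) = c s(b,a) := fun a b => by rw [Sym2.eq_swap]
  rcases DEC _ _ _ _ _ h1 h2 h3 h4 h5 with
    ⟨e1,e2⟩|⟨e1,e2⟩|⟨e1,e2⟩|⟨e1,e2⟩|⟨e1,e2⟩|⟨e1,e2⟩|⟨e1,e2⟩|⟨e1,e2⟩|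
    ⟨e1,e2,e3⟩|⟨e1,e2,e3⟩|⟨e1,e2,e3⟩|⟨e1,e2,e3⟩|⟨e1,e2,e3⟩|⟨e1,e2,e3⟩
  · exact Or.inl (mkP3 c p q r hpq hpr hqr' e1 e2)
  · exact Or.inl (mkP3 c p q s hpq hps hqs' e1 e2)
  · exact Or.inl (mkP3 c p r s hpr hps hrs e1 e2)
  · exact Or.inl (mkP3 c q p r hpq.symm hqr hpr' (by rw [sw]; exact e1) e2)
  · exact Or.inl (mkP3 c q p s hpq.symm hqs hps' (by rw [sw]; exact e1) e2)
  · exact Or.inl (mkP3 c q r s hqr hqs hrs e1 e2)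
  · exact Or.inl (mkP3 c r p q hpr.symm hqr.symm hpq' (by rw [sw]; exact e1) (by rw [sw]; exact e2))
  · exact Or.inl (mkP3 c s p q hps.symm hqs.symm hpq' (by rw [sw]; exact e1) (by rw [sw]; exact e2))
  -- r-p-q-s : edges rp=d2, pq=d1, qs=d5
  · exact Or.inr (mkP4 c r p q s hpr.symm hpq hqs hqr'.symm hrs hps'
      (by rw [sw]; exact e2) e1 e3)
  -- s-p-q-r : edges sp=d3, pq=d1, qr=d4
  · exact Or.inr (mkP4 c s p q r hps.symm hpq hqr hqs'.symm hrs.symm hpr'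
      (by rw [sw]; exact e2) e1 e3)
  -- r-p-s-q : edges rp=d2, ps=d3, sq=d5
  · exact Or.inr (mkP4 c r p s q hpr.symm hps hqs.symm hrs hqr'.symm hpq'
      (by rw [sw]; exact e1) e2 (by rw [sw]; exact e3))
  -- r-q-s-p : edges rq=d4, qs=d5, sp=d3
  · exact Or.inr (mkP4 c r q s p hqr.symm hqs hps.symm hrs hpr'.symm hpq'.symm
      (by rw [sw]; exact e2) e3 (by rw [sw]; exact e1))
  -- p-r-q-s : edges pr=d2, rq=d4, qs=d5
  · exact Or.inr (mkP4 c p r q s hpr hqr.symm hqs hpq' hps' hrs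
      e1 (by rw [sw]; exact e2) e3)
  -- q-r-p-s : edges qr=d4, rp=d2, ps=d3
  · exact Or.inr (mkP4 c q r p s hqr hpr.symm hps hpq'.symm hqs' hrs
      e3 (by rw [sw]; exact e1) e2)

end L1

section T2
variable (c : Sym2 (Fin 3 × Fin 2) → Fin 3)

abbrev goal22 (c : Sym2 (Fin 3 × Fin 2) → Fin 3) : Prop :=
  Contains (colorClass (multiK 3 2) c 0) (pathGraph 3) ∨
    Contains (colorClass (multiK 3 2) c 1) (pathGraph 4) ∨
    Contains (colorClass (multiK 3 2) c 2) (stripe 2)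

/-- Step: if `x y` is a color-2 edge, examine the 5 edges avoiding `{x,y}`. -/
lemma step22 (x y p q r s : Fin 3 × Fin 2)
    (hxy : x.1 ≠ y.1) (hc2 : c s(x, y) = 2)
    (hpq : p.1 ≠ q.1) (hpr : p.1 ≠ r.1) (hps : p.1 ≠ s.1)
    (hqr : q.1 ≠ r.1) (hqs : q.1 ≠ s.1) (hrs : r ≠ s)
    (xp : x ≠ p) (xq : x ≠ q) (xr : x ≠ r) (xs : x ≠ s)
    (yp : y ≠ p) (yq : y ≠ q) (yr : y ≠ r) (ys : y ≠ s) :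
    goal22 c := by
  by_cases m1 : c s(p, q) = 2
  · exact Or.inr (Or.inr (mkS2 c x y p q hxy hpq xp xq yp yq hc2 m1))
  by_cases m2 : c s(p, r) = 2
  · exact Or.inr (Or.inr (mkS2 c x y p r hxy hpr xp xr yp yr hc2 m2))
  by_cases m3 : c s(p, s) = 2
  · exact Or.inr (Or.inr (mkS2 c x y p s hxy hps xp xs yp ys hc2 m3))
  by_cases m4 : c s(q, r) = 2
  · exact Or.inr (Or.inr (mkS2 c x y q r hxy hqr xq xr yq yr hc2 m4))
  by_cases m5 : c s(q, s) = 2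
  · exact Or.inr (Or.inr (mkS2 c x y q s hxy hqs xq xs yq ys hc2 m5))
  rcases L1 c p q r s hpq hpr hps hqr hqs hrs m1 m2 m3 m4 m5 with h | h
  · exact Or.inl h
  · exact Or.inr (Or.inl h)

lemma thm22 : goal22 c := by
  set a0 : Fin 3 × Fin 2 := (0, 0) with ha0
  set a1 : Fin 3 × Fin 2 := (0, 1) with ha1
  set b0 : Fin 3 × Fin 2 := (1, 0) with hb0
  set b1 : Fin 3 × Fin 2 := (1, 1) with hb1
  set c0 : Fin 3 × Fin 2 := (2, 0) with hc0
  set c1 : Fin 3 × Fin 2 := (2, 1) with hc1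
  by_cases k1 : c s(a1, b1) = 2
  · exact step22 c a1 b1 a0 b0 c0 c1 (by decide) k1 (by decide) (by decide) (by decide)
      (by decide) (by decide) (by decide) (by decide) (by decide) (by decide) (by decide)
      (by decide) (by decide) (by decide) (by decide)
  by_cases k2 : c s(a1, c0) = 2
  · exact step22 c a1 c0 a0 c1 b0 b1 (by decide) k2 (by decide) (by decide) (by decide)
      (by decide) (by decide) (by decide) (by decide) (by decide) (by decide) (by decide)
      (by decide) (by decide) (by decide) (by decide)
  by_cases k3 : c s(a1, c1) = 2
  · exact step22 c a1 c1 a0 c0 b0 b1 (by decide) k3 (by decide) (by decide) (by decide)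
      (by decide) (by decide) (by decide) (by decide) (by decide) (by decide) (by decide)
      (by decide) (by decide) (by decide) (by decide)
  by_cases k4 : c s(b1, c0) = 2
  · exact step22 c b1 c0 b0 c1 a0 a1 (by decide) k4 (by decide) (by decide) (by decide)
      (by decide) (by decide) (by decide) (by decide) (by decide) (by decide) (by decide)
      (by decide) (by decide) (by decide) (by decide)
  by_cases k5 : c s(b1, c1) = 2
  · exact step22 c b1 c1 b0 c0 a0 a1 (by decide) k5 (by decide) (by decide) (by decide)
      (by decide) (by decide) (by decide) (by decide) (by decide) (by decide) (by decide)
      (by decide) (by decide) (by decide) (by decide)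
  rcases L1 c a1 b1 c0 c1 (by decide) (by decide) (by decide) (by decide) (by decide)
      (by decide) k1 k2 k3 k4 k5 with h | h
  · exact Or.inl h
  · exact Or.inr (Or.inl h)

end T2

lemma fin3cases : ∀ x : Fin 3, x = 0 ∨ x = 1 ∨ x = 2 := by decide

set_option maxHeartbeats 1000000 in
set_option synthInstance.maxHeartbeats 1000000 in
lemma DEC2 : ∀ d1 d2 d3 : Fin 3, d1 ≠ 2 → d2 ≠ 2 → d3 ≠ 2 →
    (d1 = 0 ∧ d2 = 0) ∨ (d1 = 0 ∧ d3 = 0) ∨ (d2 = 0 ∧ d3 = 0) ∨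
    (d1 = 0 ∧ d2 = 1 ∧ d3 = 1) ∨ (d2 = 0 ∧ d1 = 1 ∧ d3 = 1) ∨
    (d3 = 0 ∧ d1 = 1 ∧ d2 = 1) ∨ (d1 = 1 ∧ d2 = 1 ∧ d3 = 1) := by decide

section T3
variable (c : Sym2 (Fin 3 × Fin 3) → Fin 3)

abbrev goal33 (c : Sym2 (Fin 3 × Fin 3) → Fin 3) : Prop :=
  Contains (colorClass (multiK 3 3) c 0) (pathGraph 3) ∨
    Contains (colorClass (multiK 3 3) c 1) (pathGraph 4) ∨
    Contains (colorClass (multiK 3 3) c 2) (stripe 3)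

/-- Endgame: two disjoint color-2 edges inside columns 0/1 (given by `F`),
plus analysis of the third-column triangle. -/
lemma endgame (F : Fin 2 × Fin 2 → Fin 3 × Fin 3)
    (hFinj : Function.Injective F)
    (hsnd : ∀ k, (F k).2 ≠ 2)
    (adj0 : (F (0,0)).1 ≠ (F (0,1)).1) (adj1 : (F (1,0)).1 ≠ (F (1,1)).1)
    (col0 : c s(F (0,0), F (0,1)) = 2) (col1 : c s(F (1,0), F (1,1)) = 2)
    (u : Fin 3 × Fin 3) (hu2 : u.2 ≠ 2) (huF : ∀ k, F k ≠ u) :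
    goal33 c := by
  have sw : ∀ a b : Fin 3 × Fin 3, c s(a,b) = c s(b,a) := fun a b => by rw [Sym2.eq_swap]
  have xF : ∀ (p : Fin 3) (k : Fin 2 × Fin 2), F k ≠ (p, (2 : Fin 3)) :=
    fun p k h => hsnd k (by rw [h])
  have ux : ∀ p : Fin 3, u ≠ (p, (2 : Fin 3)) := fun p h => hu2 (by rw [h])
  have S3 : ∀ w5 w6 : Fin 3 × Fin 3, w5.1 ≠ w6.1 → (∀ k, F k ≠ w5) → (∀ k, F k ≠ w6) →
      c s(w5, w6) = 2 → goal33 c := by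
    intro w5 w6 h a5 a6 hc
    refine Or.inr (Or.inr (mkS3 c (F (0,0)) (F (0,1)) (F (1,0)) (F (1,1)) w5 w6
      adj0 adj1 h ?_ ?_ ?_ ?_ (a5 _) (a6 _) (a5 _) (a6 _) (a5 _) (a6 _) (a5 _) (a6 _)
      col0 col1 hc)) <;>
    exact fun h' => absurd (hFinj h') (by decide)
  -- triangle vertices
  by_cases T1 : c s(((0:Fin 3), (2:Fin 3)), ((1:Fin 3), (2:Fin 3))) = 2
  · exact S3 _ _ (by decide) (xF 0) (xF 1) T1
  by_cases T2 : c s(((0:Fin 3), (2:Fin 3)), ((2:Fin 3), (2:Fin 3))) = 2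
  · exact S3 _ _ (by decide) (xF 0) (xF 2) T2
  by_cases T3 : c s(((1:Fin 3), (2:Fin 3)), ((2:Fin 3), (2:Fin 3))) = 2
  · exact S3 _ _ (by decide) (xF 1) (xF 2) T3
  -- helper for the (0,1,1) triangle pattern
  have PathCase : ∀ a b g : Fin 3, a ≠ b → a ≠ g → b ≠ g →
      c s((a,(2:Fin 3)), (b,(2:Fin 3))) = 0 →
      c s((a,(2:Fin 3)), (g,(2:Fin 3))) = 1 →
      c s((g,(2:Fin 3)), (b,(2:Fin 3))) = 1 → goal33 c := by
    intro a b g hab hag hbg e0 e1 e2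
    by_cases hua : u.1 = a
    · -- u.1 = a ≠ b : use endpoint (b,2)
      have hub : u.1 ≠ b := by rw [hua]; exact hab
      rcases fin3cases (c s(((b:Fin 3),(2:Fin 3)), u)) with h | h | h
      · exact Or.inl (mkP3 c (b,2) (a,2) u (by simpa using hab.symm) (by simpa using hub.symm)
          (ux a).symm (by rw [sw]; exact e0) h)
      · exact Or.inr (Or.inl (mkP4 c u (b,2) (g,2) (a,2) (by simpa using hub)
          (by simpa using hbg) (by simpa using hag.symm) (ux g) (ux a)
          (fun hh => hab (congrArg Prod.fst hh).symm)
          (by rw [sw]; exact h) (by rw [sw]; exact e2) (by rw [sw]; exact e1)))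
      · exact S3 (b,2) u (by simpa using hub.symm) (xF b) huF h
    · rcases fin3cases (c s(((a:Fin 3),(2:Fin 3)), u)) with h | h | h
      · exact Or.inl (mkP3 c (a,2) (b,2) u (by simpa using hab) (by simpa using (Ne.symm hua))
          (ux b).symm e0 h)
      · exact Or.inr (Or.inl (mkP4 c u (a,2) (g,2) (b,2) (by simpa using hua)
          (by simpa using hag) (by simpa using hbg.symm) (ux g) (ux b)
          (fun hh => hab (by simpa using congrArg Prod.fst hh))
          (by rw [sw]; exact h) e1 e2))
      · exact S3 (a,2) u (by simpa using (Ne.symm hua)) (xF a) huF h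
  -- helper for the all-1 triangle
  have AllOne : ∀ p q g : Fin 3, p ≠ q → p ≠ g → q ≠ g → u.1 ≠ p → u.1 ≠ q →
      c s((p,(2:Fin 3)), (q,(2:Fin 3))) = 1 →
      c s((q,(2:Fin 3)), (g,(2:Fin 3))) = 1 →
      c s((p,(2:Fin 3)), (g,(2:Fin 3))) = 1 → goal33 c := by
    intro p q g hpq hpg hqg hup huq e1 e2 e3
    rcases fin3cases (c s(((p:Fin 3),(2:Fin 3)), u)) with h | h | h
    · rcases fin3cases (c s(((q:Fin 3),(2:Fin 3)), u)) with h' | h' | h'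
      · exact Or.inl (mkP3 c u (p,2) (q,2) (by simpa using hup) (by simpa using huq)
          (fun hh => hpq (by simpa using congrArg Prod.fst hh))
          (by rw [sw]; exact h) (by rw [sw]; exact h'))
      · exact Or.inr (Or.inl (mkP4 c u (q,2) (p,2) (g,2) (by simpa using huq)
          (by simpa using hpq.symm) (by simpa using hpg) (ux p) (ux g)
          (fun hh => hqg (by simpa using congrArg Prod.fst hh))
          (by rw [sw]; exact h') (by rw [sw]; exact e1) e3))
      · exact S3 (q,2) u (by simpa using huq.symm) (xF q) huF h'
    · exact Or.inr (Or.inl (mkP4 c u (p,2) (q,2) (g,2) (by simpa using hup)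
        (by simpa using hpq) (by simpa using hqg) (ux q) (ux g)
        (fun hh => hpg (by simpa using congrArg Prod.fst hh))
        (by rw [sw]; exact h) e1 e2))
    · exact S3 (p,2) u (by simpa using hup.symm) (xF p) huF h
  rcases DEC2 _ _ _ T1 T2 T3 with
    ⟨e1,e2⟩|⟨e1,e2⟩|⟨e1,e2⟩|⟨e1,e2,e3⟩|⟨e1,e2,e3⟩|⟨e1,e2,e3⟩|⟨e1,e2,e3⟩
  · exact Or.inl (mkP3 c ((0:Fin 3),(2:Fin 3)) (1,2) (2,2) (by decide) (by decide)
      (by decide) e1 e2)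
  · exact Or.inl (mkP3 c ((1:Fin 3),(2:Fin 3)) (0,2) (2,2) (by decide) (by decide)
      (by decide) (by rw [sw]; exact e1) e2)
  · exact Or.inl (mkP3 c ((2:Fin 3),(2:Fin 3)) (0,2) (1,2) (by decide) (by decide)
      (by decide) (by rw [sw]; exact e1) (by rw [sw]; exact e2))
  · exact PathCase 0 1 2 (by decide) (by decide) (by decide) e1 e2 (by rw [sw]; exact e3)
  · exact PathCase 0 2 1 (by decide) (by decide) (by decide) e1 e2 e3
  · exact PathCase 1 2 0 (by decide) (by decide) (by decide) e1 (by rw [sw]; exact e2) e3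
  · rcases fin3cases u.1 with h | h | h
    · exact AllOne 1 2 0 (by decide) (by decide) (by decide) (by rw [h]; decide)
        (by rw [h]; decide) e3 (by rw [sw]; exact e2) (by rw [sw]; exact e1)
    · exact AllOne 0 2 1 (by decide) (by decide) (by decide) (by rw [h]; decide)
        (by rw [h]; decide) e2 (by rw [sw]; exact e3) e1
    · exact AllOne 0 1 2 (by decide) (by decide) (by decide) (by rw [h]; decide)
        (by rw [h]; decide) e1 e3 e2

end T3

def emb : Fin 3 × Fin 2 → Fin 3 × Fin 3 := fun v => (v.1, v.2.castLE (by omega))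

lemma emb_inj : Function.Injective emb := by
  intro a b h
  have h1 := congrArg Prod.fst h
  have h2 := congrArg Prod.snd h
  simp only [emb] at h1 h2
  exact Prod.ext h1 (by exact_mod_cast Fin.castLE_injective _ h2)

lemma emb_fst (v : Fin 3 × Fin 2) : (emb v).1 = v.1 := rfl

lemma transfer (c : Sym2 (Fin 3 × Fin 3) → Fin 3) (i : Fin 3) {β : Type*} (H : SimpleGraph β)
    (h : Contains (colorClass (multiK 3 2) (fun e => c (Sym2.map emb e)) i) H) :
    Contains (colorClass (multiK 3 3) c i) H := by
  obtain ⟨f, hinj, hadj⟩ := h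
  refine ⟨emb ∘ f, emb_inj.comp hinj, ?_⟩
  intro a b hab
  obtain ⟨h1, h2⟩ := hadj hab
  refine ⟨h1, ?_⟩
  rw [← Sym2.map_pair_eq]
  exact h2

lemma thm33 (c : Sym2 (Fin 3 × Fin 3) → Fin 3) : goal33 c := by
  rcases thm22 (fun e => c (Sym2.map emb e)) with h | h | h
  · exact Or.inl (transfer c 0 _ h)
  · exact Or.inr (Or.inl (transfer c 1 _ h))
  · obtain ⟨f, hinj, hadj⟩ := h
    have hs : ¬ Function.Surjective f := by
      intro hs
      have := Fintype.card_le_of_surjective f hs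
      simp [Fintype.card_prod] at this
    simp only [Function.Surjective, not_forall, not_exists] at hs
    obtain ⟨u0, hu0⟩ := hs
    have A0 := hadj (a := ((0:Fin 2),(0:Fin 2))) (b := ((0:Fin 2),(1:Fin 2))) ⟨rfl, by decide⟩
    have A1 := hadj (a := ((1:Fin 2),(0:Fin 2))) (b := ((1:Fin 2),(1:Fin 2))) ⟨rfl, by decide⟩
    have sndlem : ∀ v : Fin 3 × Fin 2, (emb v).2 ≠ 2 := by
      intro v hv
      have h2 := congrArg Fin.val hv
      simp only [emb] at h2
      have := v.2.isLt
      simp at h2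
      omega
    refine endgame c (emb ∘ f) (emb_inj.comp hinj) (fun k => sndlem (f k)) A0.1 A1.1 ?_ ?_
      (emb u0) (sndlem u0) (fun k hk => hu0 k (emb_inj hk))
    · rw [← Sym2.map_pair_eq]; exact A0.2
    · rw [← Sym2.map_pair_eq]; exact A1.2

instance {j t : ℕ} : DecidableRel (multiK j t).Adj :=
  fun a b => inferInstanceAs (Decidable (a.1 ≠ b.1))

instance {α : Type*} [DecidableEq α] {k : ℕ} (G : SimpleGraph α) [DecidableRel G.Adj]
    (c : Sym2 α → Fin k) (i : Fin k) : DecidableRel (colorClass G c i).Adj :=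
  fun a b => inferInstanceAs (Decidable (G.Adj a b ∧ c s(a, b) = i))

instance {n : ℕ} : DecidableRel (pathGraph n).Adj :=
  fun a b => decidable_of_iff _ pathGraph_adj.symm

instance {n : ℕ} : DecidableRel (stripe n).Adj :=
  fun a b => inferInstanceAs (Decidable (a.1 = b.1 ∧ a.2 ≠ b.2))

instance {α β : Type*} [Fintype α] [Fintype β] [DecidableEq α] [DecidableEq β]
    (G : SimpleGraph α) (H : SimpleGraph β) [DecidableRel G.Adj] [DecidableRel H.Adj] :
    Decidable (Contains G H) :=
  inferInstanceAs (Decidable (∃ f : β → α, Function.Injective f ∧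
    ∀ ⦃a b⦄, H.Adj a b → G.Adj (f a) (f b)))

lemma lower1 (n : ℕ) (hn : 2 ≤ n) : ¬ Arrows3 3 1 n := by
  intro h
  rcases h (fun _ => 1) with h | h | h
  · revert h; decide
  · revert h; decide
  · obtain ⟨f, hinj, -⟩ := h
    have := Fintype.card_le_of_injective f hinj
    simp [Fintype.card_prod] at this
    omega

def c23 : Sym2 (Fin 3 × Fin 2) → Fin 3 :=
  Sym2.lift ⟨fun v w => if v.1 = 0 ∨ w.1 = 0 then 2 else if v.2 = w.2 then 0 else 1,
    by decide⟩

lemma c23_eq0 {v w : Fin 3 × Fin 2} (h : c23 s(v, w) = 0) :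
    v.1 ≠ 0 ∧ w.1 ≠ 0 ∧ v.2 = w.2 := by
  simp only [c23, Sym2.lift_mk] at h
  by_cases h1 : v.1 = 0 ∨ w.1 = 0
  · rw [if_pos h1] at h; exact absurd h (by decide)
  · rw [if_neg h1] at h
    push_neg at h1
    by_cases h2 : v.2 = w.2
    · exact ⟨h1.1, h1.2, h2⟩
    · rw [if_neg h2] at h; exact absurd h (by decide)

lemma c23_eq1 {v w : Fin 3 × Fin 2} (h : c23 s(v, w) = 1) :
    v.1 ≠ 0 ∧ w.1 ≠ 0 ∧ v.2 ≠ w.2 := by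
  simp only [c23, Sym2.lift_mk] at h
  by_cases h1 : v.1 = 0 ∨ w.1 = 0
  · rw [if_pos h1] at h; exact absurd h (by decide)
  · rw [if_neg h1] at h
    push_neg at h1
    by_cases h2 : v.2 = w.2
    · rw [if_pos h2] at h; exact absurd h (by decide)
    · exact ⟨h1.1, h1.2, h2⟩

lemma fin3uniq : ∀ a b d : Fin 3, a ≠ 0 → b ≠ 0 → d ≠ 0 → a ≠ b → d ≠ b → a = d := by decide

lemma fin2uniq : ∀ a b d : Fin 2, a ≠ b → d ≠ b → a = d := by decide

lemma lower2 : ¬ Arrows3 3 2 3 := by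
  intro h
  rcases h c23 with h | h | h
  · obtain ⟨f, hinj, hadj⟩ := h
    obtain ⟨a01, c01⟩ := hadj (a := 0) (b := 1) (by decide)
    obtain ⟨a12, c12⟩ := hadj (a := 1) (b := 2) (by decide)
    obtain ⟨e0, e1, e2⟩ := c23_eq0 c01
    obtain ⟨-, e3, e4⟩ := c23_eq0 c12
    have h1 : (f 0).1 = (f 2).1 := fin3uniq _ _ _ e0 e1 e3 a01 (Ne.symm a12)
    have : f 0 = f 2 := Prod.ext h1 (e2.trans e4)
    exact absurd (hinj this) (by decide)
  · obtain ⟨f, hinj, hadj⟩ := h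
    obtain ⟨a01, c01⟩ := hadj (a := 0) (b := 1) (by decide)
    obtain ⟨a12, c12⟩ := hadj (a := 1) (b := 2) (by decide)
    obtain ⟨e0, e1, e2⟩ := c23_eq1 c01
    obtain ⟨-, e3, e4⟩ := c23_eq1 c12
    have h1 : (f 0).1 = (f 2).1 := fin3uniq _ _ _ e0 e1 e3 a01 (Ne.symm a12)
    have h2 : (f 0).2 = (f 2).2 := fin2uniq _ _ _ e2 (Ne.symm e4)
    have : f 0 = f 2 := Prod.ext h1 h2
    exact absurd (hinj this) (by decide)
  · obtain ⟨f, hinj, hadj⟩ := h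
    -- each of the three color-2 edges meets part 0, which has only two vertices
    have key : ∀ k : Fin 3, ∃ m : Fin 2, (f (k, m)).1 = 0 := by
      intro k
      have := hadj (a := (k, 0)) (b := (k, 1)) ⟨rfl, by simp⟩
      obtain ⟨-, hc⟩ := this
      by_contra hcon
      push_neg at hcon
      have h0 := hcon 0
      have h1 := hcon 1
      revert hc
      simp only [c23, Sym2.lift_mk]
      rw [if_neg (by tauto)]
      split <;> decide
    choose m hm using key
    have : ∀ k : Fin 3, (f (k, m k)).2 = (f (k, m k)).2 := fun _ => rfl
    obtain ⟨k1, k2, hne, heq⟩ :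
        ∃ k1 k2 : Fin 3, k1 ≠ k2 ∧ (f (k1, m k1)).2 = (f (k2, m k2)).2 := by
      have := Fintype.exists_ne_map_eq_of_card_lt
        (fun k : Fin 3 => (f (k, m k)).2) (by simp)
      obtain ⟨k1, k2, h1, h2⟩ := this
      exact ⟨k1, k2, h1, h2⟩
    have : f (k1, m k1) = f (k2, m k2) :=
      Prod.ext (by rw [hm k1, hm k2]) heq
    have := hinj this
    exact hne (congrArg Prod.fst this)

end Aux

theorem stmt5 (n : ℕ) (hn : n = 2 ∨ n = 3) :
    IsLeast {t : ℕ | 0 < t ∧ Arrows3 3 t n} n := by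
  rcases hn with rfl | rfl
  · constructor
    · exact ⟨by norm_num, fun c => thm22 c⟩
    · rintro t ⟨hpos, hA⟩
      by_contra hlt
      push_neg at hlt
      interval_cases t
      exact lower1 2 le_rfl hA
  · constructor
    · exact ⟨by norm_num, fun c => thm33 c⟩
    · rintro t ⟨hpos, hA⟩
      by_contra hlt
      push_neg at hlt
      interval_cases t
      · exact lower1 3 (by norm_num) hA
      · exact lower2 hA
end

section
/- For all integers j ≥ 3 and n ≥ j, m_j(nK_2, C_7) ≥ ⌈(2n+2)/j⌉. Equivalently, with t₀ = ⌈(2n+2)/j⌉ − 1, there exists a 2-coloring of the edges of K_{j×t₀} containing no matching nK_2 in the first color and no cycle C_7 in the second color. -/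
open SimpleGraph

-- key lemma
lemma keyCol (j t n : ℕ) (hj : 3 ≤ j) (ht : 1 ≤ t) (hjt : j * t ≤ 2 * n + 1) :
    ∃ c : Sym2 (Fin j × Fin t) → Fin 2,
      ¬ Contains (colorClass (multiK j t) c 0) (stripe n) ∧
      ¬ Contains (colorClass (multiK j t) c 1) (cycleGraph 7) := by
  classical
  set p : Fin j × Fin t → Prop := fun v => v.1.val < 3 ∧ v.2.val = 0 with hp
  refine ⟨Sym2.lift ⟨fun a b => if p a ∨ p b then 1 else 0, ?_⟩, ?_, ?_⟩
  · intro a b; simp [or_comm]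
  · rintro ⟨f, hfinj, hfadj⟩
    -- every image vertex satisfies ¬ p
    have hnp : ∀ x : Fin n × Fin 2, ¬ p (f x) := by
      rintro ⟨i, b⟩ hpb
      have hadj : (stripe n).Adj (i, (0 : Fin 2)) (i, (1 : Fin 2)) := ⟨rfl, by simp⟩
      have h0 := (hfadj hadj).2
      simp only [Sym2.lift_mk] at h0
      have : ¬ (p (f (i, 0)) ∨ p (f (i, 1))) := by
        intro h; rw [if_pos h] at h0; exact absurd h0 (by decide)
      push_neg at this
      fin_cases b
      · exact this.1 hpb
      · exact this.2 hpb
    -- injection from (Fin n × Fin 2) ⊕ Fin 3 into Fin j × Fin t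
    have ht' : (0 : ℕ) < t := ht
    let s : Fin 3 → Fin j × Fin t := fun k => (⟨k.val, lt_of_lt_of_le k.isLt hj⟩, ⟨0, ht'⟩)
    have hsp : ∀ k, p (s k) := fun k => ⟨k.isLt, rfl⟩
    have hsinj : Function.Injective s := by
      intro a b hab
      have : (a : ℕ) = b := congrArg (fun v => v.1.val) hab
      exact Fin.ext this
    have hinj : Function.Injective (Sum.elim f s) := by
      rintro (x | x) (y | y) hxy <;>
        simp only [Sum.elim_inl, Sum.elim_inr] at hxy
      · exact congrArg Sum.inl (hfinj hxy)
      · exact absurd (hxy ▸ hsp y) (hnp x)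
      · exact absurd (hxy.symm ▸ hsp x) (hnp y)
      · exact congrArg Sum.inr (hsinj hxy)
    have hcard := Fintype.card_le_of_injective _ hinj
    simp [Fintype.card_sum, Fintype.card_prod] at hcard
    omega
  · rintro ⟨f, hfinj, hfadj⟩
    set A : Finset (Fin 7) := Finset.univ.filter (fun i => p (f i)) with hA
    have hAcard : A.card ≤ 3 := by
      have hmem : ∀ i ∈ A, p (f i) := by
        intro i hi; exact (Finset.mem_filter.mp hi).2
      let g : Fin 7 → Fin 3 := fun i => ⟨min (f i).1.val 2, by omega⟩
      have hinjOn : Set.InjOn g A := by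
        intro a ha b hb hab
        have hpa := hmem a ha
        have hpb := hmem b hb
        apply hfinj
        have h1 : (f a).1.val = (f b).1.val := by
          have := congrArg Fin.val hab
          simp only [g] at this
          omega
        have h2 : (f a).2.val = (f b).2.val := by rw [hpa.2, hpb.2]
        exact Prod.ext (Fin.ext h1) (Fin.ext h2)
      calc A.card ≤ (Finset.univ : Finset (Fin 3)).card :=
            Finset.card_le_card_of_injOn g (fun i _ => Finset.mem_univ _) hinjOn
        _ = 3 := by simp
    have hcover : ∀ a b : Fin 7, (cycleGraph 7).Adj a b → a ∈ A ∨ b ∈ A := by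
      intro a b hab
      have h1 := (hfadj hab).2
      simp only [Sym2.lift_mk] at h1
      by_contra hc
      push_neg at hc
      simp only [hA, Finset.mem_filter, Finset.mem_univ, true_and] at hc
      rw [if_neg (by tauto)] at h1
      exact absurd h1 (by decide)
    revert hAcard hcover
    -- decide there is no vertex cover of size ≤ 3
    have : ¬ ∃ A : Finset (Fin 7), A.card ≤ 3 ∧
        ∀ a b : Fin 7, (cycleGraph 7).Adj a b → a ∈ A ∨ b ∈ A := by
      set_option maxRecDepth 10000 in decide
    intro h1 h2
    exact this ⟨A, h1, h2⟩

theorem stmt13 (j n : ℕ) (hj : 3 ≤ j) (hn : j ≤ n) :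
    (∀ t : ℕ, 0 < t → ArrowsC7 j t n → (2 * n + 2 + j - 1) / j ≤ t) ∧
    (∃ c : Sym2 (Fin j × Fin ((2 * n + 2 + j - 1) / j - 1)) → Fin 2,
      ¬ Contains (colorClass (multiK j ((2 * n + 2 + j - 1) / j - 1)) c 0) (stripe n) ∧
      ¬ Contains (colorClass (multiK j ((2 * n + 2 + j - 1) / j - 1)) c 1) (cycleGraph 7)) := by
  have hj0 : 0 < j := by omega
  set q : ℕ := (2 * n + 2 + j - 1) / j with hq
  have hub : j * q ≤ 2 * n + 2 + j - 1 := by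
    rw [hq, mul_comm]; exact Nat.div_mul_le_self _ _
  have hlb : 3 ≤ q := by
    rw [hq, Nat.le_div_iff_mul_le hj0]; omega
  have hkey : ∀ t : ℕ, 1 ≤ t → t ≤ q - 1 →
      ∃ c : Sym2 (Fin j × Fin t) → Fin 2,
        ¬ Contains (colorClass (multiK j t) c 0) (stripe n) ∧
        ¬ Contains (colorClass (multiK j t) c 1) (cycleGraph 7) := by
    intro t ht1 ht2
    apply keyCol j t n hj ht1
    have h1 : j * t ≤ j * (q - 1) := Nat.mul_le_mul_left j ht2
    have h2 : j * q = j * (q - 1) + j := by rw [← Nat.mul_succ]; congr 1; omega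
    omega
  constructor
  · intro t ht hArr
    by_contra hlt
    push_neg at hlt
    obtain ⟨c, hc0, hc1⟩ := hkey t ht (by omega)
    rcases hArr c with h | h
    · exact hc0 h
    · exact hc1 h
  · exact hkey (q - 1) (by omega) le_rfl
end
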